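/- Consider a two-player random game where player A's payoffs U^A(a,b) for (a,b) in [K^A]×[K^B] are i.i.d. uniform on [0,1], and independently for each action profile, with probability p one sets U^B(a,b) = U^A(a,b) and with probability 1-p draws U^B(a,b) as an independent uniform on [0,1]. Then the probability that the action profile (1,1) is a pure Nash equilibrium equals p/(K^A + K^B - 1) + (1-p)/(K^A K^B). -/

import Mathlib

open MeasureTheory ProbabilityTheory Set

section Aux

variable {Ω : Type*} [MeasurableSpace Ω]

lemma unif_prob : IsProbabilityMeasure (volume.restrict (Set.Icc (0:ℝ) 1)) :=
  ⟨by simp [Real.volume_Icc]⟩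

lemma unif_Iic {p : ℝ} (hp : p ∈ Set.Icc (0:ℝ) 1) :
    (volume.restrict (Set.Icc (0:ℝ) 1)) (Set.Iic p) = ENNReal.ofReal p := by
  rw [Measure.restrict_apply measurableSet_Iic]
  have h : Set.Iic p ∩ Set.Icc 0 1 = Set.Icc 0 p := by
    ext y
    simp only [Set.mem_inter_iff, Set.mem_Iic, Set.mem_Icc]
    obtain ⟨h0, h1⟩ := hp
    constructor
    · rintro ⟨a, b, c⟩; exact ⟨b, a⟩
    · rintro ⟨a, b⟩; exact ⟨b, a, le_trans b h1⟩
  rw [h, Real.volume_Icc, sub_zero]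

lemma unif_Ioi {p : ℝ} (hp : p ∈ Set.Icc (0:ℝ) 1) :
    (volume.restrict (Set.Icc (0:ℝ) 1)) (Set.Ioi p) = ENNReal.ofReal (1 - p) := by
  rw [Measure.restrict_apply measurableSet_Ioi]
  have h : Set.Ioi p ∩ Set.Icc 0 1 = Set.Ioc p 1 := by
    ext y
    simp only [Set.mem_inter_iff, Set.mem_Ioi, Set.mem_Icc, Set.mem_Ioc]
    obtain ⟨h0, h1⟩ := hp
    constructor
    · rintro ⟨a, b, c⟩; exact ⟨a, c⟩
    · rintro ⟨a, b⟩; exact ⟨a, le_trans h0 a.le, b⟩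
  rw [h, Real.volume_Ioc]

lemma aux_int (k : ℕ) :
    ∫⁻ x, ((volume.restrict (Set.Icc (0:ℝ) 1)) (Set.Iic x)) ^ k
        ∂(volume.restrict (Set.Icc (0:ℝ) 1))
      = ENNReal.ofReal (1 / (k + 1)) := by
  have hcong : ∫⁻ x in Set.Icc (0:ℝ) 1, ((volume.restrict (Set.Icc (0:ℝ) 1)) (Set.Iic x)) ^ k ∂volume
      = ∫⁻ x in Set.Icc (0:ℝ) 1, ENNReal.ofReal (x ^ k) ∂volume := by
    refine setLIntegral_congr_fun measurableSet_Icc (fun x hx => ?_)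
    rw [unif_Iic hx, ← ENNReal.ofReal_pow hx.1]
  rw [hcong, ← ofReal_integral_eq_lintegral_ofReal
      ((continuous_pow k).integrableOn_Icc)
      ((ae_restrict_iff' measurableSet_Icc).mpr (Filter.Eventually.of_forall fun x hx => pow_nonneg hx.1 k))]
  congr 1
  rw [MeasureTheory.integral_Icc_eq_integral_Ioc, ← intervalIntegral.integral_of_le zero_le_one,
    integral_pow]
  push_cast
  rw [one_pow, zero_pow (by omega)]
  ring


theorem aux_blocks {ι κ : Type*} {P : Measure Ω}
    {f : ι → Ω → ℝ} (hmeas : ∀ i, Measurable (f i))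
    (hindep : iIndepFun f P)
    (t : κ → Finset ι) (ht : Pairwise (Function.onFun Disjoint t)) :
    iIndepFun (fun j ω (i : t j) => f i ω) P := by
  classical
  have hprod := iIndepFun_iff_measure_inter_preimage_eq_mul.mp hindep
  set π : κ → Set (Set Ω) := fun j =>
    {s | ∃ E : ι → Set ℝ, (∀ i, MeasurableSet (E i)) ∧ s = ⋂ i ∈ t j, f i ⁻¹' E i} with hπ
  rw [iIndepFun_iff_iIndep]
  refine iIndepSets.iIndep (fun j => Measurable.comap_le (measurable_pi_lambda _ fun i => hmeas i))
    π (fun j => ?_) (fun j => ?_) ?_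
  · -- IsPiSystem
    rintro s1 ⟨E1, hE1, rfl⟩ s2 ⟨E2, hE2, rfl⟩ -
    refine ⟨fun i => E1 i ∩ E2 i, fun i => (hE1 i).inter (hE2 i), ?_⟩
    ext ω
    simp only [Set.mem_inter_iff, Set.mem_iInter, Set.mem_preimage]
    aesop
  · -- generateFrom
    rw [← generateFrom_pi, MeasurableSpace.comap_generateFrom]
    congr 1
    ext s
    simp only [Set.mem_image, Set.mem_setOf_eq, hπ]
    constructor
    · rintro ⟨B, ⟨sets, hsets, rfl⟩, rfl⟩
      refine ⟨fun i => if h : i ∈ t j then sets ⟨i, h⟩ else Set.univ, ?_, ?_⟩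
      · intro i
        by_cases h : i ∈ t j
        · simpa [h] using hsets ⟨i, h⟩ (Set.mem_univ _)
        · simp [h]
      · ext ω
        simp only [Set.mem_preimage, Set.mem_pi, Set.mem_univ, forall_true_left,
          Set.mem_iInter, Subtype.forall]
        constructor
        · intro h i hi; simpa [hi] using h i hi
        · intro h i hi; simpa [hi] using h i hi
    · rintro ⟨E, hE, rfl⟩
      refine ⟨Set.pi Set.univ (fun i : t j => E i), ⟨fun i : t j => E i, fun i _ => hE i, rfl⟩, ?_⟩
      ext ω
      simp only [Set.mem_preimage, Set.mem_pi, Set.mem_univ, forall_true_left,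
        Set.mem_iInter, Subtype.forall]
  · -- iIndepSets
    rw [iIndepSets_iff]
    intro S F hF
    have hch : ∀ j, ∃ E : ι → Set ℝ,
        j ∈ S → (∀ i, MeasurableSet (E i)) ∧ F j = ⋂ i ∈ t j, f i ⁻¹' E i := by
      intro j
      by_cases hj : j ∈ S
      · obtain ⟨E, hE1, hE2⟩ := hF j hj
        exact ⟨E, fun _ => ⟨hE1, hE2⟩⟩
      · exact ⟨fun _ => Set.univ, fun h => absurd h hj⟩
    choose E hE using hch
    have hEt : ∀ i, MeasurableSet (⋂ j ∈ S, ⋂ (_ : i ∈ t j), E j i) := by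
      intro i
      refine Set.Finite.measurableSet_biInter S.finite_toSet fun j hj => ?_
      exact MeasurableSet.iInter fun _ => (hE j hj).1 i
    have hset : ∀ j ∈ S, ∀ i ∈ t j, (⋂ j' ∈ S, ⋂ (_ : i ∈ t j'), E j' i) = E j i := by
      intro j hj i hi
      apply Set.Subset.antisymm
      · intro x hx
        exact Set.mem_iInter.mp (Set.mem_iInter₂.mp hx j hj) hi
      · intro x hx
        refine Set.mem_iInter₂.mpr fun j' hj' => Set.mem_iInter.mpr fun hij' => ?_
        obtain rfl : j' = j := by
          by_contra hne
          exact (Finset.disjoint_left.mp (ht hne) hij') hi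
        exact hx
    have hkey : ⋂ j ∈ S, F j
        = ⋂ i ∈ S.biUnion t, f i ⁻¹' (⋂ j ∈ S, ⋂ (_ : i ∈ t j), E j i) := by
      ext ω
      simp only [Set.mem_iInter, Finset.mem_biUnion, Set.mem_preimage]
      constructor
      · rintro h i ⟨j, hj, hij⟩ j' hj' hij'
        have h2 := h j' hj'
        rw [(hE j' hj').2] at h2
        exact Set.mem_iInter₂.mp h2 i hij'
      · intro h j hj
        rw [(hE j hj).2]
        refine Set.mem_iInter₂.mpr fun i hij => ?_
        exact h i ⟨j, hj, hij⟩ j hj hij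
    rw [hkey, hprod (S.biUnion t) (fun i _ => hEt i),
      Finset.prod_biUnion (fun x _ y _ hxy => ht hxy)]
    refine Finset.prod_congr rfl fun j hj => ?_
    have h1 : ∀ i ∈ t j, f i ⁻¹' (⋂ j' ∈ S, ⋂ (_ : i ∈ t j'), E j' i) = f i ⁻¹' E j i := by
      intro i hi
      rw [hset j hj i hi]
    rw [Finset.prod_congr rfl fun i hi => by rw [h1 i hi]]
    rw [← hprod (t j) (fun i _ => (hE j hj).1 i), ← (hE j hj).2]

theorem aux_pi {κ κ' : Type*} [Fintype κ'] {P : Measure Ω} [IsProbabilityMeasure P]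
    {g : κ → Ω → ℝ} (hg : ∀ j, Measurable (g j))
    (hind : iIndepFun g P)
    {μ : Measure ℝ} [IsProbabilityMeasure μ] (e : κ' → κ) (he : Function.Injective e)
    (hlaw : ∀ j, P.map (g (e j)) = μ) :
    P.map (fun ω j => g (e j) ω) = Measure.pi (fun _ => μ) := by
  classical
  refine ((Measure.pi_eq (μ := fun _ : κ' => μ) fun s hs => ?_)).symm
  rw [Measure.map_apply (measurable_pi_lambda _ fun j => hg (e j)) (MeasurableSet.univ_pi hs)]
  have h1 : (fun ω j => g (e j) ω) ⁻¹' (Set.pi Set.univ s)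
      = ⋂ i ∈ Finset.univ.image e, g i ⁻¹' (Function.extend e s (fun _ => Set.univ) i) := by
    ext ω
    simp only [Set.mem_preimage, Set.mem_pi, Set.mem_univ, forall_true_left, Set.mem_iInter,
      Finset.mem_image, Finset.mem_univ, true_and]
    constructor
    · rintro h i ⟨j, rfl⟩
      rw [he.extend_apply]
      exact h j
    · intro h j
      have := h (e j) ⟨j, rfl⟩
      rwa [he.extend_apply] at this
  rw [h1, iIndepFun_iff_measure_inter_preimage_eq_mul.mp hind _ (fun i hi => ?_)]
  · rw [Finset.prod_image (fun x _ y _ h => he h)]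
    refine (Finset.prod_congr rfl fun j _ => ?_).symm
    rw [he.extend_apply, ← Measure.map_apply (hg (e j)) (hs j), hlaw j]
  · obtain ⟨j, _, rfl⟩ := Finset.mem_image.mp hi
    rw [he.extend_apply]
    exact hs j

theorem aux_indep {κ κ1 κ2 : Type*} [Fintype κ1] [Fintype κ2] {P : Measure Ω}
    {g : κ → Ω → ℝ} (hg : ∀ j, Measurable (g j))
    (hind : iIndepFun g P)
    (e1 : κ1 → κ) (e2 : κ2 → κ) (hne : ∀ j1 j2, e1 j1 ≠ e2 j2) :
    IndepFun (fun ω j => g (e1 j) ω) (fun ω j => g (e2 j) ω) P := by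
  classical
  have hdis : Disjoint (Finset.univ.image e1) (Finset.univ.image e2) := by
    simp only [Finset.disjoint_left, Finset.mem_image]
    rintro i ⟨j1, -, rfl⟩ ⟨j2, -, h⟩
    exact hne j1 j2 h.symm
  have base := hind.indepFun_finset _ _ hdis hg
  have h1 : Measurable fun (v : ↥(Finset.univ.image e1) → ℝ) (j : κ1) =>
      v ⟨e1 j, Finset.mem_image_of_mem e1 (Finset.mem_univ j)⟩ :=
    measurable_pi_lambda _ fun j => measurable_pi_apply _
  have h2 : Measurable fun (v : ↥(Finset.univ.image e2) → ℝ) (j : κ2) =>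
      v ⟨e2 j, Finset.mem_image_of_mem e2 (Finset.mem_univ j)⟩ :=
    measurable_pi_lambda _ fun j => measurable_pi_apply _
  exact base.comp h1 h2


theorem aux_max {κ J : Type*} [Fintype J] {P : Measure Ω} [IsProbabilityMeasure P]
    {g : κ → Ω → ℝ} (hg : ∀ j, Measurable (g j))
    (hind : iIndepFun g P)
    (hlaw : ∀ j, P.map (g j) = volume.restrict (Set.Icc (0:ℝ) 1))
    (e : J → κ) (he : Function.Injective e) (i0 : κ) (hne : ∀ j, e j ≠ i0) :
    P {ω | ∀ j, g (e j) ω ≤ g i0 ω} = ENNReal.ofReal (1 / (Fintype.card J + 1)) := by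
  classical
  set μ : Measure ℝ := volume.restrict (Set.Icc (0:ℝ) 1) with hμ
  haveI : IsProbabilityMeasure μ := unif_prob
  -- independence of g i0 and the tuple
  have hIFt := aux_indep hg hind (fun _ : Unit => i0) e (fun _ j => (hne j).symm)
  have hIF : IndepFun (g i0) (fun ω j => g (e j) ω) P := by
    have := hIFt.comp (φ := fun v : Unit → ℝ => v ()) (ψ := id) (measurable_pi_apply () : Measurable (fun v : Unit → ℝ => v ())) measurable_id
    exact this
  have htuple : Measurable fun ω (j : J) => g (e j) ω :=
    measurable_pi_lambda _ fun j => hg (e j)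
  have hmap : P.map (fun ω => (g i0 ω, fun j => g (e j) ω))
      = μ.prod (Measure.pi fun _ : J => μ) := by
    rw [(indepFun_iff_map_prod_eq_prod_map_map (hg i0).aemeasurable htuple.aemeasurable).mp hIF,
      hlaw i0, aux_pi (μ := μ) hg hind e he (fun j => hlaw (e j))]
  have hM : MeasurableSet {q : ℝ × (J → ℝ) | ∀ j, q.2 j ≤ q.1} := by
    have : {q : ℝ × (J → ℝ) | ∀ j, q.2 j ≤ q.1} = ⋂ j, {q : ℝ × (J → ℝ) | q.2 j ≤ q.1} := by
      ext q; simp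
    rw [this]
    refine MeasurableSet.iInter fun j => measurableSet_le ?_ ?_ <;> fun_prop
  have hev : {ω | ∀ j, g (e j) ω ≤ g i0 ω}
      = (fun ω => (g i0 ω, fun j => g (e j) ω)) ⁻¹' {q : ℝ × (J → ℝ) | ∀ j, q.2 j ≤ q.1} := rfl
  rw [hev, ← Measure.map_apply ((hg i0).prodMk htuple) hM, hmap,
    Measure.prod_apply hM]
  have hsec : ∀ x : ℝ, (Prod.mk x ⁻¹' {q : ℝ × (J → ℝ) | ∀ j, q.2 j ≤ q.1})
      = Set.pi Set.univ (fun _ : J => Set.Iic x) := by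
    intro x; ext v; simp [Set.mem_pi, Pi.le_def]
  have hval : ∀ x : ℝ, (Measure.pi fun _ : J => μ) (Prod.mk x ⁻¹' {q : ℝ × (J → ℝ) | ∀ j, q.2 j ≤ q.1})
      = (μ (Set.Iic x)) ^ (Fintype.card J) := by
    intro x
    rw [hsec x, Measure.pi_pi, Finset.prod_const, Finset.card_univ]
  calc ∫⁻ x, (Measure.pi fun _ : J => μ) (Prod.mk x ⁻¹' {q : ℝ × (J → ℝ) | ∀ j, q.2 j ≤ q.1}) ∂μ
      = ∫⁻ x, (μ (Set.Iic x)) ^ (Fintype.card J) ∂μ := by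
        exact lintegral_congr fun x => hval x
    _ = ENNReal.ofReal (1 / (Fintype.card J + 1)) := aux_int (Fintype.card J)

theorem aux_coin {P : Measure Ω} [IsProbabilityMeasure P] {p : ℝ} (hp : p ∈ Set.Icc (0:ℝ) 1)
    {C U V : Ω → ℝ} (hC : Measurable C) (hU : Measurable U) (hV : Measurable V)
    (hCl : P.map C = volume.restrict (Set.Icc (0:ℝ) 1))
    (hUl : P.map U = volume.restrict (Set.Icc (0:ℝ) 1))
    (hVl : P.map V = volume.restrict (Set.Icc (0:ℝ) 1))
    (hCU : IndepFun C U P) (hCV : IndepFun C V P) :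
    P.map (fun ω => if C ω ≤ p then U ω else V ω) = volume.restrict (Set.Icc (0:ℝ) 1) := by
  have hW : Measurable fun ω => if C ω ≤ p then U ω else V ω :=
    Measurable.ite (measurableSet_le hC measurable_const) hU hV
  haveI := unif_prob
  haveI : IsProbabilityMeasure (P.map (fun ω => if C ω ≤ p then U ω else V ω)) :=
    Measure.isProbabilityMeasure_map hW.aemeasurable
  refine MeasureTheory.Measure.ext_of_Iic _ _ fun t => ?_
  rw [Measure.map_apply hW measurableSet_Iic]
  have hsplit : (fun ω => if C ω ≤ p then U ω else V ω) ⁻¹' Set.Iic t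
      = (C ⁻¹' Set.Iic p ∩ U ⁻¹' Set.Iic t) ∪ (C ⁻¹' Set.Ioi p ∩ V ⁻¹' Set.Iic t) := by
    ext ω
    by_cases h : C ω ≤ p <;>
      simp [Set.mem_Iic, Set.mem_Ioi, h, not_le.mp, lt_of_not_ge]
  have hdisj : Disjoint (C ⁻¹' Set.Iic p ∩ U ⁻¹' Set.Iic t) (C ⁻¹' Set.Ioi p ∩ V ⁻¹' Set.Iic t) := by
    rw [Set.disjoint_left]
    rintro ω ⟨h1, -⟩ ⟨h2, -⟩
    have h1' : C ω ≤ p := h1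
    have h2' : p < C ω := h2
    exact absurd h1' (not_le.mpr h2')
  rw [hsplit, measure_union hdisj ((hC measurableSet_Ioi).inter (hV measurableSet_Iic)),
    hCU.measure_inter_preimage_eq_mul _ _ measurableSet_Iic measurableSet_Iic,
    hCV.measure_inter_preimage_eq_mul _ _ measurableSet_Ioi measurableSet_Iic]
  have e1 : P (C ⁻¹' Set.Iic p) = ENNReal.ofReal p := by
    rw [← Measure.map_apply hC measurableSet_Iic, hCl, unif_Iic hp]
  have e2 : P (C ⁻¹' Set.Ioi p) = ENNReal.ofReal (1 - p) := by
    rw [← Measure.map_apply hC measurableSet_Ioi, hCl, unif_Ioi hp]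
  have e3 : P (U ⁻¹' Set.Iic t) = (volume.restrict (Set.Icc (0:ℝ) 1)) (Set.Iic t) := by
    rw [← Measure.map_apply hU measurableSet_Iic, hUl]
  have e4 : P (V ⁻¹' Set.Iic t) = (volume.restrict (Set.Icc (0:ℝ) 1)) (Set.Iic t) := by
    rw [← Measure.map_apply hV measurableSet_Iic, hVl]
  rw [e1, e2, e3, e4, ← add_mul]
  rw [← ENNReal.ofReal_add hp.1 (by linarith [hp.2]), add_sub_cancel, ENNReal.ofReal_one, one_mul]

end Aux
/-- Correlated random game: player A's payoffs `UA` are i.i.d. uniform on `[0,1]`;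
independently for each profile, with probability `p` one sets `UB = UA` and otherwise
`UB` is a fresh independent uniform (realized here via i.i.d. uniform coins `C` and
fresh uniforms `V`). Then the probability that the profile `(1,1)` is a pure Nash
equilibrium equals `p/(KA + KB - 1) + (1-p)/(KA·KB)`. -/
theorem prob_profile_is_PNE
    {Ω : Type*} [MeasurableSpace Ω] (P : Measure Ω) [IsProbabilityMeasure P]
    (KA KB : ℕ) (hKA : 1 ≤ KA) (hKB : 1 ≤ KB) (p : ℝ) (hp : p ∈ Set.Icc (0:ℝ) 1)
    (f : Fin 3 × Fin KA × Fin KB → Ω → ℝ)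
    (hmeas : ∀ i, Measurable (f i))
    (hindep : iIndepFun f P)
    (hunif : ∀ i, P.map (f i) = volume.restrict (Set.Icc (0:ℝ) 1))
    (UA UB : Fin KA → Fin KB → Ω → ℝ)
    (hUA : ∀ a b, UA a b = f (0, a, b))
    (hUB : ∀ a b ω, UB a b ω =
      if f (1, a, b) ω ≤ p then UA a b ω else f (2, a, b) ω) :
    P {ω | (∀ a, UA a ⟨0, by omega⟩ ω ≤ UA ⟨0, by omega⟩ ⟨0, by omega⟩ ω) ∧
           (∀ b, UB ⟨0, by omega⟩ b ω ≤ UB ⟨0, by omega⟩ ⟨0, by omega⟩ ω)}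
      = ENNReal.ofReal (p / (KA + KB - 1) + (1 - p) / (KA * KB)) := by
  classical
  obtain ⟨m, rfl⟩ : ∃ m, KA = m + 1 := ⟨KA - 1, by omega⟩
  obtain ⟨n, rfl⟩ : ∃ n, KB = n + 1 := ⟨KB - 1, by omega⟩
  haveI := unif_prob
  -- the grouped family of independent random variables
  set g : (Fin 3 ⊕ (Fin m ⊕ Fin n)) → Ω → ℝ :=
    Sum.elim (fun k ω => f (k, 0, 0) ω)
      (Sum.elim (fun a ω => f (0, Fin.succ a, 0) ω)
        (fun b ω => if f (1, 0, Fin.succ b) ω ≤ p then f (0, 0, Fin.succ b) ω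
          else f (2, 0, Fin.succ b) ω)) with hg_def
  have hgmeas : ∀ j, Measurable (g j) := by
    rintro (k | a | b)
    · exact hmeas _
    · exact hmeas _
    · exact Measurable.ite (measurableSet_le (hmeas _) measurable_const) (hmeas _) (hmeas _)
  -- blocks
  set t : (Fin 3 ⊕ (Fin m ⊕ Fin n)) → Finset (Fin 3 × Fin (m+1) × Fin (n+1)) :=
    Sum.elim (fun k => {(k, 0, 0)})
      (Sum.elim (fun a => {((0 : Fin 3), Fin.succ a, (0 : Fin (n+1)))})
        (fun b => {((0 : Fin 3), (0 : Fin (m+1)), Fin.succ b),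
                   ((1 : Fin 3), (0 : Fin (m+1)), Fin.succ b),
                   ((2 : Fin 3), (0 : Fin (m+1)), Fin.succ b)})) with ht_def
  have mem_char : ∀ (j : Fin 3 ⊕ Fin m ⊕ Fin n) (i : Fin 3 × Fin (m+1) × Fin (n+1)), i ∈ t j →
      (∃ k, j = Sum.inl k ∧ i = (k, 0, 0)) ∨
      (∃ a, j = Sum.inr (Sum.inl a) ∧ i = (0, Fin.succ a, 0)) ∨
      (∃ b c, j = Sum.inr (Sum.inr b) ∧ i = (c, 0, Fin.succ b)) := by
    rintro (k | a | b) i hi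
    · exact Or.inl ⟨k, rfl, by simpa [ht_def] using hi⟩
    · exact Or.inr (Or.inl ⟨a, rfl, by simpa [ht_def] using hi⟩)
    · right; right
      refine ⟨b, ?_⟩
      simp only [ht_def, Sum.elim_inr, Finset.mem_insert, Finset.mem_singleton] at hi
      rcases hi with h | h | h
      exacts [⟨0, rfl, h⟩, ⟨1, rfl, h⟩, ⟨2, rfl, h⟩]
  have key : ∀ (j j' : Fin 3 ⊕ Fin m ⊕ Fin n) i, i ∈ t j → i ∈ t j' → j = j' := by
    intro j j' i hj hj'
    rcases mem_char j i hj with ⟨k, rfl, rfl⟩ | ⟨a, rfl, rfl⟩ | ⟨b, c, rfl, rfl⟩ <;>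
      rcases mem_char j' _ hj' with ⟨k', rfl, h⟩ | ⟨a', rfl, h⟩ | ⟨b', c', rfl, h⟩ <;>
      simp only [Prod.mk.injEq] at h <;> obtain ⟨h1, h2, h3⟩ := h
    · rw [h1]
    · exact absurd h2.symm (Fin.succ_ne_zero a')
    · exact absurd h3.symm (Fin.succ_ne_zero b')
    · exact absurd h2 (Fin.succ_ne_zero a)
    · rw [Fin.succ_inj.mp h2]
    · exact absurd h3.symm (Fin.succ_ne_zero b')
    · exact absurd h3 (Fin.succ_ne_zero b)
    · exact absurd h3 (Fin.succ_ne_zero b)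
    · rw [Fin.succ_inj.mp h3]
  have ht : Pairwise (Function.onFun Disjoint t) := by
    intro j j' hne
    refine Finset.disjoint_left.mpr ?_
    intro i hx hy
    exact hne (key j j' i hx hy)
  -- independence of the grouped family
  have hblocks := aux_blocks hmeas hindep t ht
  have hgind : iIndepFun g P := by
    have hc := hblocks.comp (mγ := fun _ => inferInstance)
      (g := fun j => (Sum.rec (motive := fun j => (↥(t j) → ℝ) → ℝ)
        (fun k v => v ⟨(k, 0, 0), Finset.mem_singleton_self _⟩)
        (Sum.rec (motive := fun j' => (↥(t (Sum.inr j')) → ℝ) → ℝ)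
          (fun a v => v ⟨((0 : Fin 3), Fin.succ a, (0 : Fin (n+1))), Finset.mem_singleton_self _⟩)
          (fun b v =>
            if v ⟨((1 : Fin 3), (0 : Fin (m+1)), Fin.succ b),
                Finset.mem_insert_of_mem (Finset.mem_insert_self _ _)⟩ ≤ p
            then v ⟨((0 : Fin 3), (0 : Fin (m+1)), Fin.succ b), Finset.mem_insert_self _ _⟩
            else v ⟨((2 : Fin 3), (0 : Fin (m+1)), Fin.succ b),
                Finset.mem_insert_of_mem (Finset.mem_insert_of_mem (Finset.mem_singleton_self _))⟩))
        j))
      ?_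
    · have hfun : ∀ j, (Sum.rec (motive := fun j => (↥(t j) → ℝ) → ℝ)
          (fun k v => v ⟨(k, 0, 0), Finset.mem_singleton_self _⟩)
          (Sum.rec (motive := fun j' => (↥(t (Sum.inr j')) → ℝ) → ℝ)
            (fun a v => v ⟨((0 : Fin 3), Fin.succ a, (0 : Fin (n+1))), Finset.mem_singleton_self _⟩)
            (fun b v =>
              if v ⟨((1 : Fin 3), (0 : Fin (m+1)), Fin.succ b),
                  Finset.mem_insert_of_mem (Finset.mem_insert_self _ _)⟩ ≤ p
              then v ⟨((0 : Fin 3), (0 : Fin (m+1)), Fin.succ b), Finset.mem_insert_self _ _⟩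
              else v ⟨((2 : Fin 3), (0 : Fin (m+1)), Fin.succ b),
                  Finset.mem_insert_of_mem (Finset.mem_insert_of_mem (Finset.mem_singleton_self _))⟩))
          j) ∘ (fun ω (i : t j) => f i ω) = g j := by
        rintro (k | a | b) <;> rfl
      simpa only [hfun] using hc
    · rintro (k | a | b)
      · exact measurable_pi_apply _
      · exact measurable_pi_apply _
      · exact Measurable.ite (measurableSet_le (measurable_pi_apply _) measurable_const)
          (measurable_pi_apply _) (measurable_pi_apply _)
  -- laws
  have hglaw : ∀ j, P.map (g j) = volume.restrict (Set.Icc (0:ℝ) 1) := by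
    rintro (k | a | b)
    · exact hunif _
    · exact hunif _
    · refine aux_coin hp (hmeas _) (hmeas _) (hmeas _) (hunif _) (hunif _) (hunif _) ?_ ?_
      · exact hindep.indepFun (by simp [Prod.ext_iff])
      · exact hindep.indepFun (by simp [Prod.ext_iff])
  -- events
  set E1 : Set Ω := {ω | g (Sum.inl 1) ω ≤ p ∧
    ∀ j : Fin m ⊕ Fin n, g (Sum.inr j) ω ≤ g (Sum.inl 0) ω} with hE1_def
  set E2 : Set Ω := {ω | p < g (Sum.inl 1) ω ∧
    ((∀ a : Fin m, g (Sum.inr (Sum.inl a)) ω ≤ g (Sum.inl 0) ω) ∧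
     (∀ b : Fin n, g (Sum.inr (Sum.inr b)) ω ≤ g (Sum.inl 2) ω))} with hE2_def
  have hEE : {ω | (∀ a, UA a ⟨0, by omega⟩ ω ≤ UA ⟨0, by omega⟩ ⟨0, by omega⟩ ω) ∧
      (∀ b, UB ⟨0, by omega⟩ b ω ≤ UB ⟨0, by omega⟩ ⟨0, by omega⟩ ω)} = E1 ∪ E2 := by
    ext ω
    simp only [hE1_def, hE2_def, Set.mem_setOf_eq, Set.mem_union, hUA, hUB, hg_def,
      Sum.elim_inl, Sum.elim_inr, Fin.mk_zero]
    constructor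
    · rintro ⟨hA, hB⟩
      by_cases hc : f (1, 0, 0) ω ≤ p
      · left
        refine ⟨hc, ?_⟩
        rintro (a | b)
        · exact hA (Fin.succ a)
        · have h2 := hB (Fin.succ b)
          rwa [if_pos hc] at h2
      · right
        refine ⟨not_le.mp hc, fun a => hA (Fin.succ a), fun b => ?_⟩
        have h2 := hB (Fin.succ b)
        rwa [if_neg hc] at h2
    · rintro (⟨hc, h⟩ | ⟨hc, hA, hB⟩)
      · refine ⟨?_, ?_⟩
        · intro a
          induction a using Fin.cases with
          | zero => exact le_rfl
          | succ a' => exact h (Sum.inl a')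
        · intro b
          rw [if_pos hc]
          induction b using Fin.cases with
          | zero => rw [if_pos hc]
          | succ b' => exact h (Sum.inr b')
      · have hc' : ¬ f (1, (0 : Fin (m+1)), (0 : Fin (n+1))) ω ≤ p := not_le.mpr hc
        refine ⟨?_, ?_⟩
        · intro a
          induction a using Fin.cases with
          | zero => exact le_rfl
          | succ a' => exact hA a'
        · intro b
          rw [if_neg hc']
          induction b using Fin.cases with
          | zero => rw [if_neg hc']
          | succ b' => exact hB b'
  have hE1m : MeasurableSet E1 := by
    have h : E1 = {ω | g (Sum.inl 1) ω ≤ p} ∩ ⋂ j, {ω | g (Sum.inr j) ω ≤ g (Sum.inl 0) ω} := by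
      ext ω; simp [hE1_def]
    rw [h]
    exact (measurableSet_le (hgmeas _) measurable_const).inter
      (MeasurableSet.iInter fun j => measurableSet_le (hgmeas _) (hgmeas _))
  have hE2m : MeasurableSet E2 := by
    have h : E2 = {ω | p < g (Sum.inl 1) ω} ∩
        ((⋂ a, {ω | g (Sum.inr (Sum.inl a)) ω ≤ g (Sum.inl 0) ω}) ∩
         (⋂ b, {ω | g (Sum.inr (Sum.inr b)) ω ≤ g (Sum.inl 2) ω})) := by
      ext ω; simp [hE2_def]
    rw [h]
    exact (measurableSet_lt measurable_const (hgmeas _)).inter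
      ((MeasurableSet.iInter fun a => measurableSet_le (hgmeas _) (hgmeas _)).inter
       (MeasurableSet.iInter fun b => measurableSet_le (hgmeas _) (hgmeas _)))
  have hdisjE : Disjoint E1 E2 := by
    rw [Set.disjoint_left]
    rintro ω ⟨h1, -⟩ ⟨h2, -⟩
    exact absurd h1 (not_le.mpr h2)
  rw [hEE, measure_union hdisjE hE2m]
  -- compute P E1
  have hP1 : P E1 = ENNReal.ofReal p * ENNReal.ofReal (1 / ((m:ℝ) + (n:ℝ) + 1)) := by
    have hind2 := aux_indep hgmeas hgind (fun _ : Unit => Sum.inl 1)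
      (Sum.elim (fun _ : Unit => Sum.inl 0) Sum.inr : Unit ⊕ (Fin m ⊕ Fin n) → _)
      (by rintro u (u' | j) <;> simp)
    have hMmeas : MeasurableSet {v : (Unit ⊕ (Fin m ⊕ Fin n)) → ℝ |
        ∀ j, v (Sum.inr j) ≤ v (Sum.inl ())} := by
      have h : {v : (Unit ⊕ (Fin m ⊕ Fin n)) → ℝ | ∀ j, v (Sum.inr j) ≤ v (Sum.inl ())}
          = ⋂ j : Fin m ⊕ Fin n,
            {v : (Unit ⊕ (Fin m ⊕ Fin n)) → ℝ | v (Sum.inr j) ≤ v (Sum.inl ())} := by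
        ext v; simp
      rw [h]
      exact MeasurableSet.iInter fun j =>
        measurableSet_le (measurable_pi_apply _) (measurable_pi_apply _)
    have hsplit := hind2.measure_inter_preimage_eq_mul
      {v : Unit → ℝ | v () ≤ p}
      {v : (Unit ⊕ (Fin m ⊕ Fin n)) → ℝ | ∀ j, v (Sum.inr j) ≤ v (Sum.inl ())}
      (measurableSet_le (measurable_pi_apply _) measurable_const) hMmeas
    have hE1eq : E1 = (fun ω (_ : Unit) => g (Sum.inl 1) ω) ⁻¹' {v | v () ≤ p} ∩
        (fun ω (j : Unit ⊕ (Fin m ⊕ Fin n)) =>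
            g (Sum.elim (fun _ : Unit => Sum.inl 0) Sum.inr j) ω) ⁻¹'
          {v | ∀ j, v (Sum.inr j) ≤ v (Sum.inl ())} := by
      ext ω
      simp [hE1_def, Set.mem_preimage]
    rw [hE1eq, hsplit]
    congr 1
    · have h : (fun ω (_ : Unit) => g (Sum.inl 1) ω) ⁻¹' {v | v () ≤ p}
          = g (Sum.inl 1) ⁻¹' Set.Iic p := rfl
      rw [h, ← Measure.map_apply (hgmeas _) measurableSet_Iic, hglaw _, unif_Iic hp]
    · have heq : (fun ω (j : Unit ⊕ (Fin m ⊕ Fin n)) =>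
          g (Sum.elim (fun _ : Unit => Sum.inl 0) Sum.inr j) ω) ⁻¹'
          {v | ∀ j, v (Sum.inr j) ≤ v (Sum.inl ())}
          = {ω | ∀ j : Fin m ⊕ Fin n, g (Sum.inr j) ω ≤ g (Sum.inl 0) ω} := rfl
      rw [heq, aux_max hgmeas hgind hglaw (Sum.inr : (Fin m ⊕ Fin n) → _)
        (fun x y h => Sum.inr_injective h) (Sum.inl 0) (by rintro (a | b) <;> simp)]
      congr 1
      simp [Fintype.card_sum]
  -- compute P E2
  have hP2 : P E2 = ENNReal.ofReal (1 - p) *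
      (ENNReal.ofReal (1 / ((m:ℝ) + 1)) * ENNReal.ofReal (1 / ((n:ℝ) + 1))) := by
    have hind2 := aux_indep hgmeas hgind (fun _ : Unit => Sum.inl 1)
      (Sum.elim (fun s : Bool => Sum.inl (cond s 0 2)) Sum.inr :
        Bool ⊕ (Fin m ⊕ Fin n) → _)
      (by
        rintro u (s | j)
        · cases s <;> simp <;> decide
        · simp)
    have hMmeas : MeasurableSet {v : (Bool ⊕ (Fin m ⊕ Fin n)) → ℝ |
        (∀ a : Fin m, v (Sum.inr (Sum.inl a)) ≤ v (Sum.inl true)) ∧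
        (∀ b : Fin n, v (Sum.inr (Sum.inr b)) ≤ v (Sum.inl false))} := by
      have h : {v : (Bool ⊕ (Fin m ⊕ Fin n)) → ℝ |
          (∀ a : Fin m, v (Sum.inr (Sum.inl a)) ≤ v (Sum.inl true)) ∧
          (∀ b : Fin n, v (Sum.inr (Sum.inr b)) ≤ v (Sum.inl false))}
          = (⋂ a : Fin m, {v : (Bool ⊕ (Fin m ⊕ Fin n)) → ℝ |
              v (Sum.inr (Sum.inl a)) ≤ v (Sum.inl true)}) ∩
            (⋂ b : Fin n, {v : (Bool ⊕ (Fin m ⊕ Fin n)) → ℝ |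
              v (Sum.inr (Sum.inr b)) ≤ v (Sum.inl false)}) := by
        ext v; simp
      rw [h]
      refine MeasurableSet.inter ?_ ?_
      · exact MeasurableSet.iInter fun a =>
          measurableSet_le (measurable_pi_apply _) (measurable_pi_apply _)
      · exact MeasurableSet.iInter fun b =>
          measurableSet_le (measurable_pi_apply _) (measurable_pi_apply _)
    have hsplit := hind2.measure_inter_preimage_eq_mul
      {v : Unit → ℝ | p < v ()}
      {v : (Bool ⊕ (Fin m ⊕ Fin n)) → ℝ |
        (∀ a : Fin m, v (Sum.inr (Sum.inl a)) ≤ v (Sum.inl true)) ∧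
        (∀ b : Fin n, v (Sum.inr (Sum.inr b)) ≤ v (Sum.inl false))}
      (measurableSet_lt measurable_const (measurable_pi_apply _)) hMmeas
    have hE2eq : E2 = (fun ω (_ : Unit) => g (Sum.inl 1) ω) ⁻¹' {v | p < v ()} ∩
        (fun ω (j : Bool ⊕ (Fin m ⊕ Fin n)) =>
            g (Sum.elim (fun s : Bool => Sum.inl (cond s 0 2)) Sum.inr j) ω) ⁻¹'
          {v | (∀ a : Fin m, v (Sum.inr (Sum.inl a)) ≤ v (Sum.inl true)) ∧
               (∀ b : Fin n, v (Sum.inr (Sum.inr b)) ≤ v (Sum.inl false))} := by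
      ext ω
      simp [hE2_def, Set.mem_preimage]
    rw [hE2eq, hsplit]
    congr 1
    · have h : (fun ω (_ : Unit) => g (Sum.inl 1) ω) ⁻¹' {v | p < v ()}
          = g (Sum.inl 1) ⁻¹' Set.Ioi p := rfl
      rw [h, ← Measure.map_apply (hgmeas _) measurableSet_Ioi, hglaw _, unif_Ioi hp]
    · -- split the remaining event into the A-part and B-part
      have hindAB := aux_indep hgmeas hgind
        (Sum.elim (fun _ : Unit => Sum.inl 0) (fun a => Sum.inr (Sum.inl a)) :
          Unit ⊕ Fin m → _)
        (Sum.elim (fun _ : Unit => Sum.inl 2) (fun b => Sum.inr (Sum.inr b)) :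
          Unit ⊕ Fin n → _)
        (by
          rintro (u | a) (u' | b) <;> simp <;> decide)
      have hMA : MeasurableSet {v : (Unit ⊕ Fin m) → ℝ | ∀ a, v (Sum.inr a) ≤ v (Sum.inl ())} := by
        have h : {v : (Unit ⊕ Fin m) → ℝ | ∀ a, v (Sum.inr a) ≤ v (Sum.inl ())}
            = ⋂ a, {v : (Unit ⊕ Fin m) → ℝ | v (Sum.inr a) ≤ v (Sum.inl ())} := by ext v; simp
        rw [h]
        exact MeasurableSet.iInter fun a =>
          measurableSet_le (measurable_pi_apply _) (measurable_pi_apply _)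
      have hMB : MeasurableSet {v : (Unit ⊕ Fin n) → ℝ | ∀ b, v (Sum.inr b) ≤ v (Sum.inl ())} := by
        have h : {v : (Unit ⊕ Fin n) → ℝ | ∀ b, v (Sum.inr b) ≤ v (Sum.inl ())}
            = ⋂ b, {v : (Unit ⊕ Fin n) → ℝ | v (Sum.inr b) ≤ v (Sum.inl ())} := by ext v; simp
        rw [h]
        exact MeasurableSet.iInter fun b =>
          measurableSet_le (measurable_pi_apply _) (measurable_pi_apply _)
      have hsplitAB := hindAB.measure_inter_preimage_eq_mul
        {v : (Unit ⊕ Fin m) → ℝ | ∀ a, v (Sum.inr a) ≤ v (Sum.inl ())}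
        {v : (Unit ⊕ Fin n) → ℝ | ∀ b, v (Sum.inr b) ≤ v (Sum.inl ())} hMA hMB
      have heq2 : (fun ω (j : Bool ⊕ (Fin m ⊕ Fin n)) =>
            g (Sum.elim (fun s : Bool => Sum.inl (cond s 0 2)) Sum.inr j) ω) ⁻¹'
          {v | (∀ a : Fin m, v (Sum.inr (Sum.inl a)) ≤ v (Sum.inl true)) ∧
               (∀ b : Fin n, v (Sum.inr (Sum.inr b)) ≤ v (Sum.inl false))}
          = (fun ω (j : Unit ⊕ Fin m) =>
              g (Sum.elim (fun _ : Unit => Sum.inl 0) (fun a => Sum.inr (Sum.inl a)) j) ω) ⁻¹'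
              {v | ∀ a, v (Sum.inr a) ≤ v (Sum.inl ())} ∩
            (fun ω (j : Unit ⊕ Fin n) =>
              g (Sum.elim (fun _ : Unit => Sum.inl 2) (fun b => Sum.inr (Sum.inr b)) j) ω) ⁻¹'
              {v | ∀ b, v (Sum.inr b) ≤ v (Sum.inl ())} := by
        ext ω
        simp [Set.mem_preimage]
      rw [heq2, hsplitAB]
      congr 1
      · have heqA : (fun ω (j : Unit ⊕ Fin m) =>
            g (Sum.elim (fun _ : Unit => Sum.inl 0) (fun a => Sum.inr (Sum.inl a)) j) ω) ⁻¹'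
            {v | ∀ a, v (Sum.inr a) ≤ v (Sum.inl ())}
            = {ω | ∀ a : Fin m, g (Sum.inr (Sum.inl a)) ω ≤ g (Sum.inl 0) ω} := rfl
        rw [heqA, aux_max hgmeas hgind hglaw (fun a : Fin m => Sum.inr (Sum.inl a))
          (fun x y h => by simpa using h) (Sum.inl 0) (by intro a; simp)]
        congr 1
        simp
      · have heqB : (fun ω (j : Unit ⊕ Fin n) =>
            g (Sum.elim (fun _ : Unit => Sum.inl 2) (fun b => Sum.inr (Sum.inr b)) j) ω) ⁻¹'
            {v | ∀ b, v (Sum.inr b) ≤ v (Sum.inl ())}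
            = {ω | ∀ b : Fin n, g (Sum.inr (Sum.inr b)) ω ≤ g (Sum.inl 2) ω} := rfl
        rw [heqB, aux_max hgmeas hgind hglaw (fun b : Fin n => Sum.inr (Sum.inr b))
          (fun x y h => by simpa using h) (Sum.inl 2) (by intro b; simp)]
        congr 1
        simp
  have hp1' : (0:ℝ) ≤ 1 - p := by linarith [hp.2]
  have s1 : ENNReal.ofReal p * ENNReal.ofReal (1 / ((m:ℝ) + (n:ℝ) + 1))
      = ENNReal.ofReal (p * (1 / ((m:ℝ) + (n:ℝ) + 1))) := (ENNReal.ofReal_mul hp.1).symm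
  have s2 : ENNReal.ofReal (1 / ((m:ℝ) + 1)) * ENNReal.ofReal (1 / ((n:ℝ) + 1))
      = ENNReal.ofReal ((1 / ((m:ℝ) + 1)) * (1 / ((n:ℝ) + 1))) :=
    (ENNReal.ofReal_mul (p := 1 / ((m:ℝ) + 1)) (by positivity)).symm
  have s3 : ENNReal.ofReal (1 - p) * ENNReal.ofReal ((1 / ((m:ℝ) + 1)) * (1 / ((n:ℝ) + 1)))
      = ENNReal.ofReal ((1 - p) * ((1 / ((m:ℝ) + 1)) * (1 / ((n:ℝ) + 1)))) :=
    (ENNReal.ofReal_mul hp1').symm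
  rw [hP1, hP2, s1, s2, s3, ← ENNReal.ofReal_add (mul_nonneg hp.1 (by positivity)) (mul_nonneg hp1' (by positivity))]
  congr 1
  push_cast
  have hmn : ((m:ℝ) + (n:ℝ) + 1) ≠ 0 := by positivity
  have hmn' : ((1:ℝ) + (m:ℝ) + (n:ℝ)) ≠ 0 := by positivity
  have hm1 : ((m:ℝ) + 1) ≠ 0 := by positivity
  have hn1 : ((n:ℝ) + 1) ≠ 0 := by positivity
  rw [show ((m:ℝ) + 1 + ((n:ℝ) + 1) - 1) = (m:ℝ) + (n:ℝ) + 1 by ring]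
  field_simp
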